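/- Let G be a finite group, z ∈ Z(G) an element of order 2, and ω a normalized 3-cocycle on G with values in ℂˣ. Let f : G × G → ℂˣ be a normalized 2-cochain (f(1,x) = f(x,1) = 1 for all x) and set ω'(x,y,w) := ω(x,y,w)·f(y,w)·f(x,y*w)/(f(x*y,w)·f(x,y)), another normalized 3-cocycle. Let θ, γ and θ', γ' be the functions associated to ω and ω' respectively. Suppose τ, τ' : G → ℂˣ are maps with τ(1) = τ'(1) = 1, γ_z(x,y) = τ(x)·τ(y)/τ(x*y), and γ'_z(x,y) = τ'(x)·τ'(y)/τ'(x*y) for all x, y ∈ G. Assume furthermore that every group homomorphism χ : G → ℂˣ satisfies χ(g)² = 1 for all g ∈ G (i.e., the exponent of the character group of G divides 2). Then θ'_g(z,z)·τ'(g)² = θ_g(z,z)·τ(g)² for all g ∈ G; that is, the 2-cocycle β ∈ Z²(A, Ĝ) with A = {1,z} is independent of all the choices made. -/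

import Mathlib

/-- Conjugation: `g^x = x⁻¹ * g * x`. -/
def cjg {G : Type*} [Group G] (g x : G) : G := x⁻¹ * g * x

/-- A normalized 3-cocycle on `G` with values in `ℂˣ`. -/
def IsNormalized3Cocycle {G : Type*} [Group G] (ω : G → G → G → ℂˣ) : Prop :=
  (∀ x y z w, ω y z w * ω x (y * z) w * ω x y z = ω (x * y) z w * ω x y (z * w)) ∧
  (∀ x y z, (x = 1 ∨ y = 1 ∨ z = 1) → ω x y z = 1)

/-- `θ_g(x,y) = ω(g,x,y)·ω(x,y,g^{xy}) / ω(x,g^x,y)`. -/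
def theta {G : Type*} [Group G] (ω : G → G → G → ℂˣ) (g x y : G) : ℂˣ :=
  ω g x y * ω x y (cjg g (x * y)) / ω x (cjg g x) y

/-- `γ_g(x,y) = ω(x,y,g)·ω(g,x^g,y^g) / ω(x,g,y^g)`. -/
def gam {G : Type*} [Group G] (ω : G → G → G → ℂˣ) (g x y : G) : ℂˣ :=
  ω x y g * ω g (cjg x g) (cjg y g) / ω x g (cjg y g)

/-- A 2-coboundary of `G` with values in `ℂˣ`. -/
def Is2Coboundary {G : Type*} [Group G] (β : G → G → ℂˣ) : Prop :=
  ∃ f : G → ℂˣ, f 1 = 1 ∧ ∀ x y, β x y = f x * f y / f (x * y)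

/-- A (normalized) 2-cocycle of `G` with values in `ℂˣ`. -/
def Is2Cocycle {G : Type*} [Group G] (β : G → G → ℂˣ) : Prop :=
  (∀ x, β x 1 = 1 ∧ β 1 x = 1) ∧
  (∀ x y z, β x y * β (x * y) z = β y z * β x (y * z))

/-- An ω-admissible pair `(τ, ν)` for a subgroup `A`. -/
def IsAdmissiblePair {G : Type*} [Group G] (ω : G → G → G → ℂˣ) (A : Subgroup G)
    (τ : A → G → ℂˣ) (ν : A → (G →* ℂˣ)) : Prop :=
  (∀ x, τ 1 x = 1) ∧ (∀ a, τ a 1 = 1) ∧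
  (∀ (a : A) (x y : G), theta ω (a : G) x y = τ a x * τ a y / τ a (x * y)) ∧
  (ν 1 = 1) ∧
  (∀ (a b : A) (g : G),
    theta ω g (a : G) (b : G) * (τ a g * τ b g / τ (a * b) g)
      = ν a g * ν b g / ν (a * b) g)

set_option maxHeartbeats 2000000 in
theorem beta_independent_of_choices {G : Type*} [Group G] [Finite G]
    (z : G) (hz : z ∈ Subgroup.center G) (hz2 : z * z = 1) (hz1 : z ≠ 1)
    (ω ω' : G → G → G → ℂˣ) (hω : IsNormalized3Cocycle ω)
    (f : G → G → ℂˣ) (hf : ∀ x : G, f 1 x = 1 ∧ f x 1 = 1)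
    (hω' : ∀ x y w : G,
      ω' x y w = ω x y w * f y w * f x (y * w) / (f (x * y) w * f x y))
    (τ τ' : G → ℂˣ) (hτ1 : τ 1 = 1) (hτ'1 : τ' 1 = 1)
    (hτ : ∀ x y : G, gam ω z x y = τ x * τ y / τ (x * y))
    (hτ' : ∀ x y : G, gam ω' z x y = τ' x * τ' y / τ' (x * y))
    (hexp : ∀ χ : G →* ℂˣ, ∀ g : G, (χ g) ^ 2 = 1) :
    ∀ g : G, theta ω' g z z * (τ' g) ^ 2 = theta ω g z z * (τ g) ^ 2 := by
  have hcent : ∀ x : G, z * x = x * z := fun x => (Subgroup.mem_center_iff.mp hz x).symm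
  have hcj : ∀ g : G, cjg g z = g := by
    intro g
    unfold cjg
    rw [mul_assoc, ← hcent, ← mul_assoc, inv_mul_cancel, one_mul]
  have hf1 : ∀ x : G, f 1 x = 1 := fun x => (hf x).1
  have hf2 : ∀ x : G, f x 1 = 1 := fun x => (hf x).2
  -- Identity B: gam changes by a coboundary of μ g := f g z / f z g
  have hB : ∀ x y : G, gam ω' z x y
      = gam ω z x y * ((f x z / f z x) * (f y z / f z y) / (f (x * y) z / f z (x * y))) := by
    intro x y
    unfold gam
    rw [hcj x, hcj y, hω', hω', hω', hcent x]
    have hyz : y * z = z * y := (hcent y).symm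
    rw [hyz]
    refine Units.ext ?_
    push_cast
    field_simp
  -- χ is a homomorphism
  have hmul : ∀ x y : G,
      τ' (x * y) / (τ (x * y) * (f (x * y) z / f z (x * y)))
        = (τ' x / (τ x * (f x z / f z x))) * (τ' y / (τ y * (f y z / f z y))) := by
    intro x y
    have h := hB x y
    rw [hτ', hτ] at h
    have h' := congrArg (Units.val) h
    push_cast at h'
    refine Units.ext ?_
    push_cast
    field_simp at h' ⊢
    linear_combination -h'
  intro g
  have hx : (τ' g / (τ g * (f g z / f z g))) ^ 2 = 1 :=
    hexp (MonoidHom.mk' (fun g => τ' g / (τ g * (f g z / f z g))) hmul) g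
  have hx2 : τ' g ^ 2 * f z g ^ 2 = τ g ^ 2 * f g z ^ 2 := by
    have hx' := congrArg (Units.val) hx
    push_cast at hx'
    refine Units.ext ?_
    push_cast
    field_simp at hx'
    linear_combination hx'
  -- Identity A: theta changes by μ g ^ (-2)
  have hA : theta ω' g z z * (f g z) ^ 2 = theta ω g z z * (f z g) ^ 2 := by
    unfold theta
    rw [hz2, hcj]
    have e1 : cjg g 1 = g := by simp [cjg]
    rw [e1, hω', hω', hω', hz2, hcent g, hf1, hf2]
    refine Units.ext ?_
    push_cast
    field_simp
  have hA' := congrArg (Units.val) hA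
  have hx2' := congrArg (Units.val) hx2
  push_cast at hA' hx2'
  refine mul_right_cancel (b := (f g z) ^ 2 * (f z g) ^ 2) ?_
  refine Units.ext ?_
  push_cast
  linear_combination (↑(τ' g) : ℂ) ^ 2 * (↑(f z g) : ℂ) ^ 2 * hA' + (↑(theta ω g z z) : ℂ) * (↑(f z g) : ℂ) ^ 2 * hx2'
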